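/- (Extremal when the quartic has a 3-fold zero.) Let γ ≠ 0 and x₁, x₄, a ∈ ℝ with x₁ ≠ x₄. Then the function u(t) = x₁ + 4γ(x₁ − x₄)/(γ²(x₁ − x₄)²·(a + t/2)² − 4γ) satisfies (u′(t))² = (γ/4)·(u(t) − x₁)³·(u(t) − x₄) at every t with γ²(x₁ − x₄)²·(a + t/2)² − 4γ ≠ 0. -/

import Mathlib

set_option maxHeartbeats 1000000


theorem stmt17 (γ x₁ x₄ a : ℝ) (hγ : γ ≠ 0) (hx : x₁ ≠ x₄) :
    ∀ t : ℝ, γ ^ 2 * (x₁ - x₄) ^ 2 * (a + t / 2) ^ 2 - 4 * γ ≠ 0 → ∃ d : ℝ,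
      HasDerivAt (fun s => x₁ +
        4 * γ * (x₁ - x₄) / (γ ^ 2 * (x₁ - x₄) ^ 2 * (a + s / 2) ^ 2 - 4 * γ)) d t ∧
      d ^ 2 = (γ / 4) *
        ((x₁ + 4 * γ * (x₁ - x₄) / (γ ^ 2 * (x₁ - x₄) ^ 2 * (a + t / 2) ^ 2 - 4 * γ)) - x₁) ^ 3 *
        ((x₁ + 4 * γ * (x₁ - x₄) / (γ ^ 2 * (x₁ - x₄) ^ 2 * (a + t / 2) ^ 2 - 4 * γ)) - x₄) := by
  intro t ht
  set D : ℝ := γ ^ 2 * (x₁ - x₄) ^ 2 * (a + t / 2) ^ 2 - 4 * γ with hDdef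
  have hD : HasDerivAt (fun s : ℝ => γ ^ 2 * (x₁ - x₄) ^ 2 * (a + s / 2) ^ 2 - 4 * γ)
      (γ ^ 2 * (x₁ - x₄) ^ 2 * (a + t / 2)) t := by
    have h1 : HasDerivAt (fun s : ℝ => a + s / 2) (1 / 2 : ℝ) t := by
      simpa using ((hasDerivAt_id t).div_const 2).const_add a
    have h2 := ((h1.pow 2).const_mul (γ ^ 2 * (x₁ - x₄) ^ 2)).sub_const (4 * γ)
    exact h2.congr_deriv (by push_cast; ring)
  have hderiv := ((hasDerivAt_const t (4 * γ * (x₁ - x₄))).div hD ht).const_add x₁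
  refine ⟨_, hderiv, ?_⟩
  have hx' : x₁ - x₄ ≠ 0 := sub_ne_zero.mpr hx
  rw [zero_mul, zero_sub]
  rw [hDdef] at ht ⊢
  set p := a + t / 2 with hp
  have ht' : γ * (x₁ - x₄) ^ 2 * p ^ 2 - 4 ≠ 0 := fun h => ht (by linear_combination γ * h)
  field_simp
  ring
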